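/- If t ∈ FEnd(Σ*) has bounded activity, i.e., there is a constant C with α_t(n) ≤ C for all n ∈ ℕ, then the orbit signalizer graph Φ(t) has finitely many vertices. -/

import Mathlib

open Filter Topology

namespace AutHier

variable {A : Type*}

/-- The section (state) `f|_u` of a transformation `f : Σ* → Σ*` at the word `u`. -/
def sec (f : List A → List A) (u : List A) : List A → List A :=
  fun v => (f (u ++ v)).drop u.length

/-- `f` is an endomorphism of `Σ*`: it preserves lengths and prefixes. -/
def IsEnd (f : List A → List A) : Prop :=
  (∀ u, (f u).length = u.length) ∧ ∀ u v, f u <+: f (u ++ v)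

/-- `f` is a finite-state endomorphism of `Σ*` (an element of `FEnd(Σ*)`). -/
def IsFEnd (f : List A → List A) : Prop :=
  IsEnd f ∧ {g | ∃ u, g = sec f u}.Finite

/-- The activity `α_f(n)` of a transformation `f`:
the number of words `v` of length `n` which are images of some word `u`
of length `n` whose section `f|_u` is nontrivial. -/
noncomputable def activity (f : List A → List A) (n : ℕ) : ℕ :=
  Set.ncard {v : List A | v.length = n ∧
    ∃ u : List A, u.length = n ∧ sec f u ≠ id ∧ f u = v}

/-- The class `SP(d)` of finite-state endomorphisms of
polynomial activity of degree at most `d`. -/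
def SP (A : Type*) (d : ℤ) : Set (List A → List A) :=
  {t | IsFEnd t ∧
    Tendsto (fun n : ℕ => (activity t n : ℝ) / (n : ℝ) ^ (d + 1)) atTop (𝓝 0)}

/-- The class `SE(l)` of finite-state endomorphisms of
exponential activity of growth rate at most `l`. -/
def SE (A : Type*) (l : ℝ) : Set (List A → List A) :=
  {t | IsFEnd t ∧
    limsup (fun n : ℕ => Real.log (activity t n) / (n : ℝ)) atTop ≤ l}

/-- The stateset `Q'(t)` of the pruned automaton: all sections of `t` except `id`. -/
def Qp (t : List A → List A) : Set (List A → List A) :=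
  {g | ∃ u, g = sec t u} \ {id}

/-- One-letter transition of the determinized pruned output automaton of `t`. -/
def delta (t : List A → List A) (S : Set (List A → List A)) (y : A) :
    Set (List A → List A) :=
  {s' | s' ∈ Qp t ∧ ∃ s ∈ S, ∃ x : A, s [x] = [y] ∧ sec s [x] = s'}

/-- Extended transition function `δ*` of the determinized pruned output automaton. -/
def deltaStar (t : List A → List A) (S : Set (List A → List A)) (v : List A) :
    Set (List A → List A) :=
  v.foldl (delta t) S

/-- There is a chain of `k` cycles in the determinized pruned output automaton of `t`. -/
def ChainOfCycles (t : List A → List A) (k : ℕ) : Prop :=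
  ∃ (S : Fin k → Set (List A → List A)) (c : Fin k → List A),
    (∀ i, S i ≠ ∅) ∧ (∀ i, c i ≠ []) ∧
    (∀ h : 0 < k, ∃ v, deltaStar t {t} v = S ⟨0, h⟩) ∧
    (∀ i, deltaStar t (S i) (c i) = S i) ∧
    (∀ (i : Fin k) (h : (i : ℕ) + 1 < k),
      (∃ v, deltaStar t (S i) v = S ⟨(i : ℕ) + 1, h⟩) ∧
      ¬ (∃ v, deltaStar t (S ⟨(i : ℕ) + 1, h⟩) v = S i))

/-- The edge relation of the orbit signalizer graph `Φ`: from the vertex `v = (s,t)`,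
reading the letter `x`, with label `(x; m, ℓ)` where `m, ℓ` are the minimal integers
(`ℓ ≥ 1`) with `(s t^{m+ℓ})·x = (s t^m)·x`, the edge goes to
`v' = (r|_x, (t^ℓ)|_{r·x})` where `r = s t^m`. -/
def OSStep (v : (List A → List A) × (List A → List A)) (x : A) (m ℓ : ℕ)
    (v' : (List A → List A) × (List A → List A)) : Prop :=
  1 ≤ ℓ ∧ v.2^[m + ℓ] (v.1 [x]) = v.2^[m] (v.1 [x]) ∧
  (∀ m' ℓ' : ℕ, 1 ≤ ℓ' → v.2^[m' + ℓ'] (v.1 [x]) = v.2^[m'] (v.1 [x]) → m ≤ m') ∧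
  (∀ ℓ' : ℕ, 1 ≤ ℓ' → v.2^[m + ℓ'] (v.1 [x]) = v.2^[m] (v.1 [x]) → ℓ ≤ ℓ') ∧
  v' = (sec (v.2^[m] ∘ v.1) [x], sec (v.2^[ℓ]) ((v.2^[m] ∘ v.1) [x]))

/-- A walk of length `n` in the orbit signalizer graph `Φ`. -/
structure OSPath (A : Type*) (n : ℕ) where
  vert : Fin (n + 1) → (List A → List A) × (List A → List A)
  lett : Fin n → A
  idx : Fin n → ℕ
  per : Fin n → ℕ
  step : ∀ k : Fin n, OSStep (vert k.castSucc) (lett k) (idx k) (per k) (vert k.succ)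

/-- The inf-index-cost `i⁻(π)` of a walk with indices `idx` and periods `per`. -/
def iminusCost {n : ℕ} (idx per : Fin n → ℕ) : ℕ :=
  ∑ k : Fin n, if idx k = 0 then 0
    else (idx k - 1) * (∏ j ∈ Finset.univ.filter (· < k), per j) + 1

/-- The sup-index-cost `i⁺(π)` of a walk with indices `idx` and periods `per`. -/
def iplusCost {n : ℕ} (idx per : Fin n → ℕ) : ℕ :=
  ∑ k : Fin n, (∏ j ∈ Finset.univ.filter (· < k), per j) * idx k

/-- The period-cost `p(π)` of a walk with periods `per`. -/
def pCost {n : ℕ} (per : Fin n → ℕ) : ℕ :=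
  ∏ k : Fin n, per k

/-- The walk `w` starts at the vertex `(id, t)`, i.e. it is a walk in `Φ(t)` from its root. -/
def IsWalkFrom {n : ℕ} (t : List A → List A) (w : OSPath A n) : Prop :=
  w.vert 0 = (id, t)

/-- The vertex `v` is accessible from `(id, t)` in `Φ`, i.e. `v` is a vertex of `Φ(t)`. -/
def OSReach (t : List A → List A) (v : (List A → List A) × (List A → List A)) : Prop :=
  ∃ n : ℕ, ∃ w : OSPath A n, IsWalkFrom t w ∧ w.vert (Fin.last n) = v

/-- The set of inf-index-costs of walks in `Φ(t)` from `(id, t)`. -/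
def IminusCosts (t : List A → List A) : Set ℕ :=
  {c | ∃ n : ℕ, ∃ w : OSPath A n, IsWalkFrom t w ∧ c = iminusCost w.idx w.per}

/-- The set of sup-index-costs of walks in `Φ(t)` from `(id, t)`. -/
def IplusCosts (t : List A → List A) : Set ℕ :=
  {c | ∃ n : ℕ, ∃ w : OSPath A n, IsWalkFrom t w ∧ c = iplusCost w.idx w.per}

/-- The set of period-costs of walks in `Φ(t)` from `(id, t)`. -/
def PCosts (t : List A → List A) : Set ℕ :=
  {c | ∃ n : ℕ, ∃ w : OSPath A n, IsWalkFrom t w ∧ c = pCost w.per}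

/-- `w` is a simple cycle of `Φ(t)`: a closed walk of positive length, lying in `Φ(t)`,
with no repeated vertices. -/
def IsSimpleCycle {n : ℕ} (t : List A → List A) (w : OSPath A n) : Prop :=
  1 ≤ n ∧ OSReach t (w.vert 0) ∧ w.vert (Fin.last n) = w.vert 0 ∧
  ∀ j k : Fin (n + 1), (j : ℕ) < n → (k : ℕ) < n → w.vert j = w.vert k → j = k

section BasicLemmas

lemma sec_apply' (f : List A → List A) (u v : List A) :
    sec f u v = (f (u ++ v)).drop u.length := rfl

lemma sec_nil (f : List A → List A) : sec f [] = f := by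
  funext v; simp [sec]

lemma sec_id' (u : List A) : sec (id : List A → List A) u = id := by
  funext v; simp [sec]

lemma sec_append (f : List A → List A) (u v : List A) :
    sec f (u ++ v) = sec (sec f u) v := by
  funext z
  show (f ((u ++ v) ++ z)).drop (u ++ v).length
      = ((f (u ++ (v ++ z))).drop u.length).drop v.length
  rw [List.append_assoc, List.drop_drop, List.length_append]

lemma IsEnd.append_eq {f : List A → List A} (hf : IsEnd f) (u v : List A) :
    f (u ++ v) = f u ++ sec f u v := by
  obtain ⟨w, hw⟩ := hf.2 u v
  have h1 : sec f u v = w := by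
    rw [sec_apply', ← hw, ← hf.1 u, List.drop_left]
  rw [h1, hw]

lemma IsEnd.id' : IsEnd (id : List A → List A) :=
  ⟨fun _ => rfl, fun u v => ⟨v, rfl⟩⟩

lemma IsEnd.comp {f g : List A → List A} (hf : IsEnd f) (hg : IsEnd g) :
    IsEnd (g ∘ f) := by
  constructor
  · intro u; simp [hg.1, hf.1]
  · intro u v
    refine ⟨sec g (f u) (sec f u v), ?_⟩
    simp only [Function.comp_apply]
    rw [hf.append_eq, hg.append_eq]

lemma IsEnd.iterate {f : List A → List A} (hf : IsEnd f) (k : ℕ) :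
    IsEnd (f^[k]) := by
  induction k with
  | zero => simpa using IsEnd.id'
  | succ k ih => rw [Function.iterate_succ']; exact ih.comp hf

lemma IsEnd.sec_isEnd {f : List A → List A} (hf : IsEnd f) (u : List A) :
    IsEnd (sec f u) := by
  constructor
  · intro v
    simp [sec, List.length_drop, hf.1, List.length_append]
  · intro v z
    have key : sec f u (v ++ z) = sec f u v ++ sec f (u ++ v) z := by
      rw [sec_apply', ← List.append_assoc, hf.append_eq (u ++ v) z,
        hf.append_eq u v, List.append_assoc,
        show u.length = (f u).length from (hf.1 u).symm, List.drop_left]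
    exact ⟨_, key.symm⟩

lemma sec_comp {f g : List A → List A} (hf : IsEnd f) (u : List A) :
    sec (g ∘ f) u = sec g (f u) ∘ sec f u := by
  funext v
  show (g (f (u ++ v))).drop u.length = (g (f u ++ sec f u v)).drop (f u).length
  rw [hf.append_eq u v, hf.1 u]

/-- `z` is periodic for `t`. -/
def Per (t : List A → List A) (z : List A) : Prop := ∃ k, 1 ≤ k ∧ t^[k] z = z

lemma Per.forward {t : List A → List A} {z : List A} (h : Per t z) (d : ℕ) :
    Per t (t^[d] z) := by
  obtain ⟨k, hk, he⟩ := h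
  exact ⟨k, hk, by rw [← Function.iterate_add_apply, Nat.add_comm,
    Function.iterate_add_apply, he]⟩

lemma Per.of_append_left {t : List A → List A} (ht : IsEnd t) {z ξ : List A}
    (h : Per t (z ++ ξ)) : Per t z := by
  obtain ⟨k, hk, he⟩ := h
  rw [(ht.iterate k).append_eq z ξ] at he
  exact ⟨k, hk, (List.append_inj he ((ht.iterate k).1 z)).1⟩

end BasicLemmas
section Invariant

/-- The invariant carried by every vertex of `Φ(t)`:
the pair is `((t^a)|_u , (t^P)|_w)` with `t^a·u = w`, `w` exactly `P`-periodic,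
`u` of preperiod `b`, and overshoot `a - b < P`. -/
def GoodPair (t : List A → List A) (v : (List A → List A) × (List A → List A)) : Prop :=
  ∃ u w : List A, ∃ a P b : ℕ,
    v.1 = sec (t^[a]) u ∧ v.2 = sec (t^[P]) w ∧ t^[a] u = w ∧
    1 ≤ P ∧ t^[P] w = w ∧ (∀ k, 1 ≤ k → t^[k] w = w → P ∣ k) ∧
    b ≤ a ∧ Per t (t^[b] u) ∧ (∀ j, j < b → ¬ Per t (t^[j] u)) ∧ a - b < P

lemma good_base {t : List A → List A} (ht : IsEnd t) : GoodPair t (id, t) := by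
  have htnil : t [] = [] := List.length_eq_zero_iff.mp (by simpa using ht.1 [])
  refine ⟨[], [], 0, 1, 0, ?_, ?_, rfl, le_refl 1, ?_, fun k _ _ => one_dvd k,
    le_refl 0, ⟨1, le_refl 1, ?_⟩, fun j hj => absurd hj (by omega), by omega⟩
  · show id = sec (t^[0]) []
    rw [sec_nil]
    rfl
  · show t = sec (t^[1]) []
    rw [sec_nil, Function.iterate_one]
  · show t^[1] [] = []
    rw [Function.iterate_one]
    exact htnil
  · show t^[1] (t^[0] []) = t^[0] []
    simpa using htnil

lemma good_step {t : List A → List A} (ht : IsEnd t)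
    {v v' : (List A → List A) × (List A → List A)} {x : A} {m ℓ : ℕ}
    (hg : GoodPair t v) (hs : OSStep v x m ℓ v') : GoodPair t v' := by
  classical
  obtain ⟨u, w, a, P, b, h1, h2, h3, hP1, hPw, hex, hba, hbp, hbm, hgap⟩ := hg
  obtain ⟨hl1, hper, hmmin, hlmin, hv'⟩ := hs
  -- powers of the cycle
  have hQ : ∀ k : ℕ, t^[k * P] w = w ∧ sec (t^[k * P]) w = v.2^[k] := by
    intro k
    induction k with
    | zero =>
      constructor
      · simp
      · simp [sec_id']
    | succ k ih =>
      have hiter : t^[(k+1) * P] = t^[P] ∘ t^[k * P] := by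
        rw [← Function.iterate_add]
        congr 1
        ring
      constructor
      · rw [hiter, Function.comp_apply, ih.1, hPw]
      · rw [hiter, sec_comp (ht.iterate (k * P)) w, ih.1, ih.2, ← h2,
          Function.iterate_succ']
  -- sections along the spine
  have hS : ∀ k : ℕ, t^[a + k * P] u = w ∧ sec (t^[a + k * P]) u = v.2^[k] ∘ v.1 := by
    intro k
    induction k with
    | zero =>
      constructor
      · simpa using h3
      · simp [h1]
    | succ k ih =>
      have hiter : t^[a + (k+1) * P] = t^[P] ∘ t^[a + k * P] := by
        rw [← Function.iterate_add]
        congr 1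
        ring
      constructor
      · rw [hiter, Function.comp_apply, ih.1, hPw]
      · rw [hiter, sec_comp (ht.iterate (a + k * P)) u, ih.1, ih.2, ← h2,
          Function.iterate_succ']
        rfl
  have hyper : v.2^[ℓ] (v.2^[m] (v.1 [x])) = v.2^[m] (v.1 [x]) := by
    rw [← Function.iterate_add_apply, Nat.add_comm ℓ m]
    exact hper
  have hsecu : sec (t^[a + m * P]) u [x] = v.2^[m] (v.1 [x]) := by
    rw [(hS m).2]
    rfl
  have h1' : v'.1 = sec (t^[a + m * P]) (u ++ [x]) := by
    rw [hv']
    show sec (v.2^[m] ∘ v.1) [x] = _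
    rw [← (hS m).2, sec_append]
  have h3' : t^[a + m * P] (u ++ [x]) = w ++ v.2^[m] (v.1 [x]) := by
    rw [(ht.iterate (a + m * P)).append_eq u [x], (hS m).1, hsecu]
  have h2' : v'.2 = sec (t^[ℓ * P]) (w ++ v.2^[m] (v.1 [x])) := by
    rw [hv']
    show sec (v.2^[ℓ]) ((v.2^[m] ∘ v.1) [x]) = _
    rw [← (hQ ℓ).2, sec_append]
    rfl
  have hP'1 : 1 ≤ ℓ * P := by
    have := Nat.mul_le_mul hl1 hP1
    simpa using this
  have hPw' : t^[ℓ * P] (w ++ v.2^[m] (v.1 [x])) = w ++ v.2^[m] (v.1 [x]) := by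
    rw [(ht.iterate (ℓ * P)).append_eq w _, (hQ ℓ).1, (hQ ℓ).2, hyper]
  -- exactness of the new period
  have hex' : ∀ k, 1 ≤ k →
      t^[k] (w ++ v.2^[m] (v.1 [x])) = w ++ v.2^[m] (v.1 [x]) → ℓ * P ∣ k := by
    intro k hk hkw
    rw [(ht.iterate k).append_eq w _] at hkw
    obtain ⟨hw1, hw2⟩ := List.append_inj hkw ((ht.iterate k).1 w)
    obtain ⟨c, hc⟩ := hex k hk hw1
    have hc1 : 1 ≤ c := by
      rcases Nat.eq_zero_or_pos c with h0 | h
      · subst h0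
        rw [Nat.mul_zero] at hc
        omega
      · exact h
    have hcy : v.2^[c] (v.2^[m] (v.1 [x])) = v.2^[m] (v.1 [x]) := by
      have h5 : sec (t^[c * P]) w (v.2^[m] (v.1 [x])) = v.2^[m] (v.1 [x]) := by
        rw [show c * P = k from by rw [hc, Nat.mul_comm]]
        exact hw2
      rwa [(hQ c).2] at h5
    have hmul : ∀ j : ℕ, v.2^[j * ℓ] (v.2^[m] (v.1 [x])) = v.2^[m] (v.1 [x]) := by
      intro j
      induction j with
      | zero => simp
      | succ j ih =>
        rw [Nat.succ_mul, Function.iterate_add_apply, hyper]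
        exact ih
    have hrem : v.2^[c % ℓ] (v.2^[m] (v.1 [x])) = v.2^[m] (v.1 [x]) := by
      calc v.2^[c % ℓ] (v.2^[m] (v.1 [x]))
          = v.2^[c % ℓ] (v.2^[c / ℓ * ℓ] (v.2^[m] (v.1 [x]))) := by rw [hmul (c / ℓ)]
        _ = v.2^[c % ℓ + c / ℓ * ℓ] (v.2^[m] (v.1 [x])) :=
            (Function.iterate_add_apply _ _ _ _).symm
        _ = v.2^[c] (v.2^[m] (v.1 [x])) := by
            rw [show c % ℓ + c / ℓ * ℓ = c from by
              rw [Nat.mul_comm]; exact Nat.mod_add_div c ℓ]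
        _ = v.2^[m] (v.1 [x]) := hcy
    have hdvd : ℓ ∣ c := by
      rcases Nat.eq_zero_or_pos (c % ℓ) with h0 | hpos
      · exact Nat.dvd_of_mod_eq_zero h0
      · exfalso
        have hle : ℓ ≤ c % ℓ := by
          apply hlmin (c % ℓ) hpos
          rw [Nat.add_comm m (c % ℓ), Function.iterate_add_apply]
          exact hrem
        have : c % ℓ < ℓ := Nat.mod_lt c (by omega)
        omega
    obtain ⟨e, he⟩ := hdvd
    exact ⟨e, by rw [hc, he]; ring⟩
  -- the new preperiod
  have hPer' : Per t (t^[a + m * P] (u ++ [x])) := by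
    rw [h3']
    exact ⟨ℓ * P, hP'1, hPw'⟩
  have hex_b : ∃ j, Per t (t^[j] (u ++ [x])) := ⟨a + m * P, hPer'⟩
  have hb'le : Nat.find hex_b ≤ a + m * P := Nat.find_le hPer'
  have hb'spec : Per t (t^[Nat.find hex_b] (u ++ [x])) := Nat.find_spec hex_b
  have hb'min : ∀ j, j < Nat.find hex_b → ¬ Per t (t^[j] (u ++ [x])) :=
    fun j hj => Nat.find_min hex_b hj
  have hprefix : ∀ j, Per t (t^[j] (u ++ [x])) → Per t (t^[j] u) := by
    intro j hPerj
    rw [(ht.iterate j).append_eq u [x]] at hPerj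
    exact hPerj.of_append_left ht
  -- overshoot bound
  have hgap' : (a + m * P) - Nat.find hex_b < ℓ * P := by
    have hPle : P ≤ ℓ * P := Nat.le_mul_of_pos_left P (by omega)
    rcases Nat.eq_zero_or_pos m with hm | hm
    · subst hm
      have hbb : b ≤ Nat.find hex_b := by
        by_contra hcon
        push_neg at hcon
        exact hbm _ hcon (hprefix _ hb'spec)
      calc (a + 0 * P) - Nat.find hex_b = a - Nat.find hex_b := by simp
        _ ≤ a - b := Nat.sub_le_sub_left hbb a
        _ < P := hgap
        _ ≤ ℓ * P := hPle
    · -- 1 ≤ m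
      have hkey : ¬ Nat.find hex_b ≤ a + (m - 1) * P := by
        intro hle
        have hfwd : Per t (t^[a + (m - 1) * P] (u ++ [x])) := by
          have h6 := hb'spec.forward ((a + (m - 1) * P) - Nat.find hex_b)
          rwa [← Function.iterate_add_apply, Nat.sub_add_cancel hle] at h6
        have hsec1 : sec (t^[a + (m - 1) * P]) u [x] = v.2^[m - 1] (v.1 [x]) := by
          rw [(hS (m - 1)).2]
          rfl
        rw [(ht.iterate (a + (m - 1) * P)).append_eq u [x], (hS (m - 1)).1,
          hsec1] at hfwd
        obtain ⟨k, hk1, hk⟩ := hfwd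
        rw [(ht.iterate k).append_eq w _] at hk
        obtain ⟨hw1, hw2⟩ := List.append_inj hk ((ht.iterate k).1 w)
        obtain ⟨c, hc⟩ := hex k hk1 hw1
        have hc1 : 1 ≤ c := by
          rcases Nat.eq_zero_or_pos c with h0 | h
          · subst h0
            rw [Nat.mul_zero] at hc
            omega
          · exact h
        have hcy : v.2^[c] (v.2^[m - 1] (v.1 [x])) = v.2^[m - 1] (v.1 [x]) := by
          have h5 : sec (t^[c * P]) w (v.2^[m - 1] (v.1 [x])) = v.2^[m - 1] (v.1 [x]) := by
            rw [show c * P = k from by rw [hc, Nat.mul_comm]]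
            exact hw2
          rwa [(hQ c).2] at h5
        have hcontra : m ≤ m - 1 := by
          apply hmmin (m - 1) c hc1
          rw [Nat.add_comm (m - 1) c, Function.iterate_add_apply]
          exact hcy
        omega
      push_neg at hkey
      have hmP : a + m * P = a + (m - 1) * P + P := by
        have h9 : m - 1 + 1 = m := Nat.succ_pred_eq_of_pos hm
        calc a + m * P = a + (m - 1 + 1) * P := by rw [h9]
          _ = a + (m - 1) * P + P := by ring
      have hgen : ∀ M1 : ℕ, a + M1 < Nat.find hex_b →
          Nat.find hex_b ≤ a + M1 + P → a + M1 + P - Nat.find hex_b < P := by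
        intro M1 hh1 hh2
        omega
      have hfin : a + m * P - Nat.find hex_b < P := by
        rw [hmP] at hb'le ⊢
        exact hgen _ hkey hb'le
      exact lt_of_lt_of_le hfin hPle
  exact ⟨u ++ [x], w ++ v.2^[m] (v.1 [x]), a + m * P, ℓ * P, Nat.find hex_b,
    h1', h2', h3', hP'1, hPw', hex', hb'le, hb'spec, hb'min, hgap'⟩

end Invariant
section Counting

attribute [local instance] Classical.propDecidable

lemma iterate_comm {α : Type*} (f : α → α) (m n : ℕ) (x : α) :
    f^[m] (f^[n] x) = f^[n] (f^[m] x) := by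
  rw [← Function.iterate_add_apply, ← Function.iterate_add_apply, Nat.add_comm]

lemma card_le_activity [Fintype A] {t : List A → List A} {n C : ℕ}
    (hC : activity t n ≤ C) {D : Finset ℕ} {f : ℕ → List A}
    (hmem : ∀ j ∈ D, (f j).length = n ∧
      ∃ u : List A, u.length = n ∧ sec t u ≠ id ∧ t u = f j)
    (hinj : Set.InjOn f ↑D) : D.card ≤ C := by
  classical
  have hfin : {v : List A | v.length = n ∧
      ∃ u : List A, u.length = n ∧ sec t u ≠ id ∧ t u = v}.Finite :=
    (List.finite_length_eq A n).subset (fun v hv => hv.1)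
  have h1 : D.card ≤ hfin.toFinset.card := by
    apply Finset.card_le_card_of_injOn f ?_ hinj
    intro j hj
    rw [Finset.mem_coe, Set.Finite.mem_toFinset]
    exact hmem j hj
  have h2 : hfin.toFinset.card = activity t n := by
    simp only [activity]
    exact (Set.ncard_eq_toFinset_card _ hfin).symm
  omega

lemma ntcard_aux [Fintype A] {t : List A → List A} (ht : IsEnd t) {C : ℕ}
    (hC : ∀ n, activity t n ≤ C) {u w : List A} {a P b : ℕ}
    (h3 : t^[a] u = w) (hP1 : 1 ≤ P) (hPw : t^[P] w = w)
    (hex : ∀ k, 1 ≤ k → t^[k] w = w → P ∣ k)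
    (hba : b ≤ a) (hbp : Per t (t^[b] u)) (hbm : ∀ j, j < b → ¬ Per t (t^[j] u))
    (hgap : a - b < P) :
    ((Finset.range a).filter (fun j => sec t (t^[j] u) ≠ id)).card ≤ 2 * C := by
  classical
  have hmem : ∀ j, sec t (t^[j] u) ≠ id →
      (t^[j+1] u).length = u.length ∧
      ∃ u0 : List A, u0.length = u.length ∧ sec t u0 ≠ id ∧ t u0 = t^[j+1] u := by
    intro j hj
    exact ⟨(ht.iterate (j+1)).1 u,
      t^[j] u, (ht.iterate j).1 u, hj, (Function.iterate_succ_apply' t j u).symm⟩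
  -- split the range at the preperiod b
  have hsplit : (Finset.range a).filter (fun j => sec t (t^[j] u) ≠ id) ⊆
      ((Finset.range b).filter (fun j => sec t (t^[j] u) ≠ id)) ∪
      ((Finset.Ico b a).filter (fun j => sec t (t^[j] u) ≠ id)) := by
    intro j hj
    simp only [Finset.mem_filter, Finset.mem_range] at hj
    simp only [Finset.mem_union, Finset.mem_filter, Finset.mem_range, Finset.mem_Ico]
    rcases Nat.lt_or_ge j b with h | h
    · exact Or.inl ⟨h, hj.2⟩
    · exact Or.inr ⟨⟨h, hj.1⟩, hj.2⟩
  -- tail bound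
  have htail : ((Finset.range b).filter (fun j => sec t (t^[j] u) ≠ id)).card ≤ C := by
    apply card_le_activity (hC u.length) (f := fun j => t^[j+1] u)
    · intro j hj
      simp only [Finset.mem_filter, Finset.mem_range] at hj
      exact hmem j hj.2
    · intro j hj j' hj' heq
      replace hj := Finset.mem_coe.mp hj
      replace hj' := Finset.mem_coe.mp hj'
      simp only [Finset.mem_filter, Finset.mem_range] at hj hj'
      by_contra hne
      rcases Nat.lt_or_ge j j' with h | h
      · have hperiodic : Per t (t^[j+1] u) := ⟨j' - j, by omega, by
          rw [← Function.iterate_add_apply,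
            show j' - j + (j+1) = j' + 1 from by omega]
          exact heq.symm⟩
        exact hbm (j+1) (by omega) hperiodic
      · have h' : j' < j := by omega
        have hperiodic : Per t (t^[j'+1] u) := ⟨j - j', by omega, by
          rw [← Function.iterate_add_apply,
            show j - j' + (j'+1) = j + 1 from by omega]
          exact heq⟩
        exact hbm (j'+1) (by omega) hperiodic
  -- cycle infrastructure
  obtain ⟨k₀, hk01, hk0⟩ := hbp
  have he : t^[a - b] (t^[b] u) = w := by
    rw [← Function.iterate_add_apply, show a - b + b = a from by omega, h3]
  have htransfer : ∀ k, t^[k] (t^[b] u) = t^[b] u → t^[k] w = w := by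
    intro k hkz
    rw [← he, ← Function.iterate_add_apply, Nat.add_comm k (a - b),
      Function.iterate_add_apply, hkz]
  have hmulk0 : ∀ c, t^[k₀ * c] (t^[b] u) = t^[b] u := by
    intro c
    induction c with
    | zero => simp
    | succ c ih => rw [Nat.mul_succ, Function.iterate_add_apply, hk0, ih]
  have hwz : t^[k₀ - (a - b) % k₀] w = t^[b] u := by
    rw [← he, ← Function.iterate_add_apply]
    have hdm := Nat.mod_add_div (a - b) k₀
    have hlt : (a - b) % k₀ < k₀ := Nat.mod_lt _ (by omega)
    have hexp : k₀ - (a - b) % k₀ + (a - b) = k₀ + k₀ * ((a - b) / k₀) := by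
      generalize k₀ * ((a - b) / k₀) = X at hdm ⊢
      omega
    rw [hexp, Function.iterate_add_apply, hmulk0, hk0]
  have hPζ : t^[P] (t^[b] u) = t^[b] u := by
    rw [← hwz, ← Function.iterate_add_apply, Nat.add_comm P _,
      Function.iterate_add_apply, hPw]
  have hdvdζ : ∀ k, 1 ≤ k → t^[k] (t^[b] u) = t^[b] u → P ∣ k :=
    fun k h1 h2 => hex k h1 (htransfer k h2)
  have haux : ∀ d d', d < d' → d' < P →
      t^[d] (t^[b] u) = t^[d'] (t^[b] u) → False := by
    intro d d' hdd hd' heq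
    have hback : t^[P - d] (t^[d] (t^[b] u)) = t^[b] u := by
      rw [← Function.iterate_add_apply, show P - d + d = P from by omega, hPζ]
    have hper2 : t^[d' - d] (t^[b] u) = t^[b] u := by
      calc t^[d' - d] (t^[b] u)
          = t^[d' - d] (t^[P - d] (t^[d] (t^[b] u))) := by rw [hback]
        _ = t^[P - d] (t^[d' - d] (t^[d] (t^[b] u))) :=
            iterate_comm t (d' - d) (P - d) _
        _ = t^[P - d] (t^[d'] (t^[b] u)) := by
            congr 1
            rw [← Function.iterate_add_apply,
              show d' - d + d = d' from by omega]
        _ = t^[P - d] (t^[d] (t^[b] u)) := by rw [heq]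
        _ = t^[b] u := hback
    have hdvd := hdvdζ (d' - d) (by omega) hper2
    have := Nat.le_of_dvd (by omega) hdvd
    omega
  have hinjζ : ∀ d d', d < P → d' < P →
      t^[d] (t^[b] u) = t^[d'] (t^[b] u) → d = d' := by
    intro d d' hd hd' heq
    rcases lt_trichotomy d d' with h | h | h
    · exact absurd (haux d d' h hd' heq) (fun hF => hF)
    · exact h
    · exact absurd (haux d' d h hd heq.symm) (fun hF => hF)
  -- cycle bound
  have hcyc : ((Finset.Ico b a).filter (fun j => sec t (t^[j] u) ≠ id)).card ≤ C := by
    apply card_le_activity (hC u.length) (f := fun j => t^[j+1] u)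
    · intro j hj
      simp only [Finset.mem_filter, Finset.mem_Ico] at hj
      exact hmem j hj.2
    · intro j hj j' hj' heq
      replace hj := Finset.mem_coe.mp hj
      replace hj' := Finset.mem_coe.mp hj'
      simp only [Finset.mem_filter, Finset.mem_Ico] at hj hj'
      have hrw : ∀ i, b ≤ i → t^[i+1] u = t^[i+1-b] (t^[b] u) := by
        intro i hbi
        rw [← Function.iterate_add_apply, show i+1-b + b = i+1 from by omega]
      have heq2 : t^[j+1-b] (t^[b] u) = t^[j'+1-b] (t^[b] u) := by
        rw [← hrw j hj.1.1, ← hrw j' hj'.1.1]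
        exact heq
      have := hinjζ (j+1-b) (j'+1-b) (by omega) (by omega) heq2
      omega
  calc ((Finset.range a).filter (fun j => sec t (t^[j] u) ≠ id)).card
      ≤ (((Finset.range b).filter (fun j => sec t (t^[j] u) ≠ id)) ∪
          ((Finset.Ico b a).filter (fun j => sec t (t^[j] u) ≠ id))).card :=
        Finset.card_le_card hsplit
    _ ≤ ((Finset.range b).filter (fun j => sec t (t^[j] u) ≠ id)).card +
          ((Finset.Ico b a).filter (fun j => sec t (t^[j] u) ≠ id)).card :=
        Finset.card_union_le _ _
    _ ≤ 2 * C := by omega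

lemma ntcard_cycle [Fintype A] {t : List A → List A} (ht : IsEnd t) {C : ℕ}
    (hC : ∀ n, activity t n ≤ C) {w : List A} {P : ℕ}
    (hP1 : 1 ≤ P) (hPw : t^[P] w = w)
    (hex : ∀ k, 1 ≤ k → t^[k] w = w → P ∣ k) :
    ((Finset.range P).filter (fun j => sec t (t^[j] w) ≠ id)).card ≤ C := by
  classical
  have hmulP : ∀ c, t^[P * c] w = w := by
    intro c
    induction c with
    | zero => simp
    | succ c ih => rw [Nat.mul_succ, Function.iterate_add_apply, hPw, ih]
  have hmod : ∀ k, t^[k] w = t^[k % P] w := by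
    intro k
    conv_lhs => rw [show k = k % P + P * (k / P) from (Nat.mod_add_div k P).symm]
    rw [Function.iterate_add_apply, hmulP]
  have haux : ∀ d d', d < d' → d' < P → t^[d] w = t^[d'] w → False := by
    intro d d' hdd hd' heq
    have hback : t^[P - d] (t^[d] w) = w := by
      rw [← Function.iterate_add_apply, show P - d + d = P from by omega, hPw]
    have hper2 : t^[d' - d] w = w := by
      calc t^[d' - d] w
          = t^[d' - d] (t^[P - d] (t^[d] w)) := by rw [hback]
        _ = t^[P - d] (t^[d' - d] (t^[d] w)) :=
            iterate_comm t (d' - d) (P - d) _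
        _ = t^[P - d] (t^[d'] w) := by
            congr 1
            rw [← Function.iterate_add_apply,
              show d' - d + d = d' from by omega]
        _ = t^[P - d] (t^[d] w) := by rw [heq]
        _ = w := hback
    have hdvd := hex (d' - d) (by omega) hper2
    have := Nat.le_of_dvd (by omega) hdvd
    omega
  have hinjw : ∀ d d', d < P → d' < P → t^[d] w = t^[d'] w → d = d' := by
    intro d d' hd hd' heq
    rcases lt_trichotomy d d' with h | h | h
    · exact absurd (haux d d' h hd' heq) (fun hF => hF)
    · exact h
    · exact absurd (haux d' d h hd heq.symm) (fun hF => hF)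
  apply card_le_activity (hC w.length) (f := fun j => t^[j+1] w)
  · intro j hj
    simp only [Finset.mem_filter, Finset.mem_range] at hj
    exact ⟨(ht.iterate (j+1)).1 w,
      t^[j] w, (ht.iterate j).1 w, hj.2, (Function.iterate_succ_apply' t j w).symm⟩
  · intro j hj j' hj' heq
    replace hj := Finset.mem_coe.mp hj
    replace hj' := Finset.mem_coe.mp hj'
    simp only [Finset.mem_filter, Finset.mem_range] at hj hj'
    have heq2 : t^[(j+1) % P] w = t^[(j'+1) % P] w := by
      rw [← hmod, ← hmod]
      exact heq
    have hP0 : 0 < P := by omega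
    have hmm := hinjw _ _ (Nat.mod_lt _ hP0) (Nat.mod_lt _ hP0) heq2
    have hj1 : j + 1 ≤ P := by omega
    have hj'1 : j' + 1 ≤ P := by omega
    rcases eq_or_lt_of_le hj1 with hh | hh
    · rcases eq_or_lt_of_le hj'1 with hh' | hh'
      · omega
      · exfalso
        rw [hh, Nat.mod_self, Nat.mod_eq_of_lt hh'] at hmm
        omega
    · rcases eq_or_lt_of_le hj'1 with hh' | hh'
      · exfalso
        rw [hh', Nat.mod_self, Nat.mod_eq_of_lt hh] at hmm
        omega
      · rw [Nat.mod_eq_of_lt hh, Nat.mod_eq_of_lt hh'] at hmm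
        omega

lemma exists_sec_list {t : List A → List A} (ht : IsEnd t) (a : ℕ) (u : List A) :
    ∃ l : List (List A → List A), (∀ g ∈ l, ∃ z : List A, g = sec t z) ∧
      l.length ≤ ((Finset.range a).filter (fun j => sec t (t^[j] u) ≠ id)).card ∧
      sec (t^[a]) u = l.foldr (· ∘ ·) id := by
  classical
  induction a with
  | zero =>
    refine ⟨[], by simp, by simp, ?_⟩
    simp [sec_id']
  | succ a ih =>
    obtain ⟨l, hm, hlen, hfold⟩ := ih
    have hsec : sec (t^[a+1]) u = sec t (t^[a] u) ∘ sec (t^[a]) u := by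
      rw [Function.iterate_succ', sec_comp (ht.iterate a) u]
    by_cases hid : sec t (t^[a] u) = id
    · refine ⟨l, hm, ?_, ?_⟩
      · apply le_trans hlen
        apply Finset.card_le_card
        apply Finset.filter_subset_filter
        simp [Finset.range_subset]
        exact fun x hx => by omega
      · rw [hsec, hid, hfold]
        rfl
    · refine ⟨sec t (t^[a] u) :: l, ?_, ?_, ?_⟩
      · intro g hg
        rcases List.mem_cons.mp hg with h | h
        · exact ⟨t^[a] u, h⟩
        · exact hm g h
      · have hins : (Finset.range (a+1)).filter (fun j => sec t (t^[j] u) ≠ id) =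
            insert a ((Finset.range a).filter (fun j => sec t (t^[j] u) ≠ id)) := by
          rw [Finset.range_add_one, Finset.filter_insert, if_pos hid]
        have hnotmem : a ∉ (Finset.range a).filter (fun j => sec t (t^[j] u) ≠ id) := by
          simp
        rw [hins, Finset.card_insert_of_notMem hnotmem]
        simp only [List.length_cons]
        omega
      · rw [hsec, hfold]
        rfl

/-- Compositions of at most `K` sections of `t`. -/
def CompSet (t : List A → List A) (K : ℕ) : Set (List A → List A) :=
  {g | ∃ l : List (List A → List A), l.length ≤ K ∧
    (∀ f ∈ l, ∃ z : List A, f = sec t z) ∧ g = l.foldr (· ∘ ·) id}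

lemma compSet_finite {t : List A → List A}
    (hfin : {g | ∃ z : List A, g = sec t z}.Finite) (K : ℕ) :
    (CompSet t K).Finite := by
  induction K with
  | zero =>
    apply Set.Finite.subset (Set.finite_singleton (id : List A → List A))
    rintro g ⟨l, hl, -, rfl⟩
    have h0 : l = [] := List.length_eq_zero_iff.mp (Nat.le_zero.mp hl)
    subst h0
    simp
  | succ K ih =>
    apply Set.Finite.subset
      ((Set.finite_singleton (id : List A → List A)).union
        (Set.Finite.image2 (· ∘ ·) hfin ih))
    rintro g ⟨l, hl, hmem, rfl⟩
    cases l with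
    | nil => exact Or.inl (by simp)
    | cons f l' =>
      right
      simp only [List.foldr_cons]
      have h1 : f ∈ {g | ∃ z : List A, g = sec t z} := hmem f (by simp)
      have h2 : l'.foldr (· ∘ ·) id ∈ CompSet t K := by
        refine ⟨l', ?_, fun f' hf' => hmem f' (by simp [hf']), rfl⟩
        simp only [List.length_cons] at hl
        omega
      exact Set.mem_image2_of_mem h1 h2

lemma good_of_walk {t : List A → List A} (ht : IsEnd t) {n : ℕ} (w : OSPath A n)
    (hw : IsWalkFrom t w) :
    ∀ k (hk : k ≤ n), GoodPair t (w.vert ⟨k, Nat.lt_succ_of_le hk⟩) := by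
  intro k
  induction k with
  | zero =>
    intro hk
    have h0 : (⟨0, Nat.lt_succ_of_le hk⟩ : Fin (n+1)) = 0 := rfl
    rw [h0, hw]
    exact good_base ht
  | succ k ih =>
    intro hk
    have hkn : k < n := by omega
    have hstep := w.step ⟨k, hkn⟩
    have hc : (⟨k, hkn⟩ : Fin n).castSucc = (⟨k, Nat.lt_succ_of_le (by omega)⟩ : Fin (n+1)) := rfl
    have hsucc : (⟨k, hkn⟩ : Fin n).succ = (⟨k+1, Nat.lt_succ_of_le hk⟩ : Fin (n+1)) := rfl
    rw [hc, hsucc] at hstep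
    exact good_step ht (ih (by omega)) hstep

end Counting
/-- If `t ∈ FEnd(Σ*)` has bounded activity, then the orbit signalizer graph `Φ(t)` has
finitely many vertices. -/
theorem bounded_activity_finite_OS {A : Type*} [Fintype A] (t : List A → List A)
    (ht : IsFEnd t) (C : ℕ) (hC : ∀ n : ℕ, activity t n ≤ C) :
    {v | OSReach t v}.Finite := by
  classical
  have hEnd : IsEnd t := ht.1
  have hsecfin : {g | ∃ u : List A, g = sec t u}.Finite := ht.2
  have hsub : {v | OSReach t v} ⊆ (CompSet t (2 * C)) ×ˢ (CompSet t C) := by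
    rintro v ⟨n, wpath, hw, hend⟩
    have hg : GoodPair t v := by
      rw [← hend]
      have hlast : (Fin.last n) = (⟨n, Nat.lt_succ_of_le (le_refl n)⟩ : Fin (n+1)) := rfl
      rw [hlast]
      exact good_of_walk hEnd wpath hw n (le_refl n)
    obtain ⟨u, w, a, P, b, h1, h2, h3, hP1, hPw, hex, hba, hbp, hbm, hgap⟩ := hg
    rw [Set.mem_prod]
    constructor
    · obtain ⟨l, hm, hlen, hfold⟩ := exists_sec_list hEnd a u
      exact ⟨l, le_trans hlen (ntcard_aux hEnd hC h3 hP1 hPw hex hba hbp hbm hgap),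
        hm, by rw [h1, hfold]⟩
    · obtain ⟨l, hm, hlen, hfold⟩ := exists_sec_list hEnd P w
      exact ⟨l, le_trans hlen (ntcard_cycle hEnd hC hP1 hPw hex),
        hm, by rw [h2, hfold]⟩
  exact Set.Finite.subset
    (Set.Finite.prod (compSet_finite hsecfin (2 * C)) (compSet_finite hsecfin C)) hsub

end AutHier
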